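/- Smoothed Thompson metric bound: let ω₀, ω₁ be positive semi-definite operators with Tr(ω₀) = Tr(ω₁) = 1 on a finite-dimensional Hilbert space and ε ∈ (0,1]. Then there exist density matrices ω̃₀, ω̃₁ with (1/2)‖ω₀ − ω̃₀‖₁ ≤ ε, (1/2)‖ω₁ − ω̃₁‖₁ ≤ ε, and d_T(ω̃₀, ω̃₁) ≤ log(2/ε), where d_T(σ,τ) = max{ D_max(σ‖τ), D_max(τ‖σ) } and D_max(σ‖τ) = inf{ λ : σ ≤ 2^λ τ }. -/

import Mathlib

open Matrix
open scoped ComplexOrder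

/-- The trace norm `‖A‖₁ = Tr √(AᴴA)`. -/
noncomputable def traceNorm {d : ℕ} (A : Matrix (Fin d) (Fin d) ℂ) : ℝ :=
  ((Matrix.posSemidef_conjTranspose_mul_self A).1.eigenvectorUnitary.1 *
    diagonal ((fun x : ℝ => (x : ℂ)) ∘ (√·) ∘ (Matrix.posSemidef_conjTranspose_mul_self A).1.eigenvalues) *
    (star (Matrix.posSemidef_conjTranspose_mul_self A).1.eigenvectorUnitary :
      Matrix (Fin d) (Fin d) ℂ)).trace.re

/-- The max-relative entropy `D_max(σ‖τ) = inf{ λ ∈ ℝ : σ ≤ 2^λ τ }`, valued in `EReal`. -/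
noncomputable def Dmax {d : ℕ} (σ τ : Matrix (Fin d) (Fin d) ℂ) : EReal :=
  sInf ((fun l : ℝ => (l : EReal)) '' {l : ℝ | ((2 : ℝ) ^ l • τ - σ).PosSemidef})

/-- Square root of a positive semidefinite matrix via its spectral decomposition. -/
noncomputable def Matrix.PosSemidef.sqrt {d : ℕ} {A : Matrix (Fin d) (Fin d) ℂ}
    (hA : A.PosSemidef) : Matrix (Fin d) (Fin d) ℂ :=
  hA.1.eigenvectorUnitary.1 * diagonal ((fun x : ℝ => (x : ℂ)) ∘ (√·) ∘ hA.1.eigenvalues) *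
    (star hA.1.eigenvectorUnitary : Matrix (Fin d) (Fin d) ℂ)

lemma traceNorm_eq_sqrt {d : ℕ} (A : Matrix (Fin d) (Fin d) ℂ) :
    traceNorm A = ((Matrix.posSemidef_conjTranspose_mul_self A).sqrt).trace.re := rfl

open scoped MatrixOrder in
lemma Matrix.PosSemidef.sqrt_eq_cfc {d : ℕ} {A : Matrix (Fin d) (Fin d) ℂ}
    (hA : A.PosSemidef) : hA.sqrt = CFC.sqrt A := by
  rw [CFC.sqrt_eq_real_sqrt A hA.nonneg, cfcₙ_eq_cfc, hA.1.cfc_eq]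
  rfl

open scoped MatrixOrder in
lemma Matrix.PosSemidef.posSemidef_sqrt {d : ℕ} {A : Matrix (Fin d) (Fin d) ℂ}
    (hA : A.PosSemidef) : hA.sqrt.PosSemidef := by
  rw [hA.sqrt_eq_cfc]; exact (CFC.sqrt_nonneg A).posSemidef

open scoped MatrixOrder in
lemma Matrix.PosSemidef.sqrt_mul_self {d : ℕ} {A : Matrix (Fin d) (Fin d) ℂ}
    (hA : A.PosSemidef) : hA.sqrt * hA.sqrt = A := by
  rw [hA.sqrt_eq_cfc]; exact CFC.sqrt_mul_sqrt_self A hA.nonneg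

open scoped MatrixOrder in
lemma Matrix.PosSemidef.eq_sqrt_of_sq_eq {d : ℕ} {A B : Matrix (Fin d) (Fin d) ℂ}
    (hB : B.PosSemidef) (hA : A.PosSemidef) (h : B ^ 2 = A) : B = hA.sqrt := by
  rw [hA.sqrt_eq_cfc]; exact (CFC.sqrt_unique (by rw [← sq]; exact h) hB.nonneg).symm

lemma smul_psd {d : ℕ} {M : Matrix (Fin d) (Fin d) ℂ} (hM : M.PosSemidef)
    {c : ℝ} (hc : 0 ≤ c) : (c • M).PosSemidef := by
  constructor
  · show (c • M)ᴴ = c • M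
    rw [Matrix.conjTranspose_smul, star_trivial, hM.1.eq]
  · intro x
    exact (hM.smul hc).2 x

lemma psd_trace_nonneg {d : ℕ} {M : Matrix (Fin d) (Fin d) ℂ} (hM : M.PosSemidef) :
    0 ≤ M.trace := by
  apply Finset.sum_nonneg
  intro i _
  exact hM.diag_nonneg

lemma trace_mul_psd_nonneg {d : ℕ} {P X : Matrix (Fin d) (Fin d) ℂ}
    (hP : P.PosSemidef) (hX : X.PosSemidef) : 0 ≤ (P * X).trace := by
  have h1 : (P * X).trace = (hX.sqrt * P * hX.sqrt).trace := by
    rw [Matrix.trace_mul_cycle, hX.sqrt_mul_self, Matrix.trace_mul_comm]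
  rw [h1]
  have h2 : (hX.sqrt * P * hX.sqrt).PosSemidef := by
    have := hP.conjTranspose_mul_mul_same hX.sqrt
    rwa [hX.posSemidef_sqrt.1.eq] at this
  exact psd_trace_nonneg h2

lemma traceNorm_smul {d : ℕ} (M : Matrix (Fin d) (Fin d) ℂ) {c : ℝ} (hc : 0 ≤ c) :
    traceNorm (c • M) = c * traceNorm M := by
  have hS := Matrix.posSemidef_conjTranspose_mul_self M
  have h1 : (c • hS.sqrt) ^ 2 = (c • M)ᴴ * (c • M) := by
    rw [Matrix.conjTranspose_smul, star_trivial, pow_two, smul_mul_smul_comm,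
      hS.sqrt_mul_self, smul_mul_smul_comm]
  have h2 := (smul_psd hS.posSemidef_sqrt hc).eq_sqrt_of_sq_eq
    (Matrix.posSemidef_conjTranspose_mul_self (c • M)) h1
  rw [traceNorm_eq_sqrt, traceNorm_eq_sqrt]
  rw [← h2, Matrix.trace_smul]
  show (c • ((hS.sqrt).trace)).re = c * (hS.sqrt).trace.re
  rw [Complex.real_smul]
  simp [Complex.mul_re]

lemma traceNorm_nonneg {d : ℕ} (A : Matrix (Fin d) (Fin d) ℂ) : 0 ≤ traceNorm A := by
  have h := psd_trace_nonneg (Matrix.posSemidef_conjTranspose_mul_self A).posSemidef_sqrt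
  have h2 := (Complex.le_def.mp h).1
  rw [traceNorm_eq_sqrt]
  simpa using h2

lemma traceNorm_sub_le {d : ℕ} {A B : Matrix (Fin d) (Fin d) ℂ}
    (hA : A.PosSemidef) (hB : B.PosSemidef) :
    traceNorm (A - B) ≤ (A.trace + B.trace).re := by
  set H := A - B with hHdef
  have hH : H.IsHermitian := hA.1.sub hB.1
  set U : Matrix (Fin d) (Fin d) ℂ := ↑(hH.eigenvectorUnitary) with hUdef
  have hsU : star U * U = 1 := Unitary.coe_star_mul_self hH.eigenvectorUnitary
  have hUs : U * star U = 1 := Unitary.coe_mul_star_self hH.eigenvectorUnitary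
  set ev : Fin d → ℝ := hH.eigenvalues with hev
  have hspec : H = U * diagonal (fun i => ((ev i : ℝ) : ℂ)) * star U := by
    exact hH.spectral_theorem
  have conj_psd : ∀ f : Fin d → ℝ, (∀ i, 0 ≤ f i) →
      (U * diagonal (fun i => (f i : ℂ)) * star U).PosSemidef := by
    intro f hf
    rw [Matrix.star_eq_conjTranspose]
    refine Matrix.PosSemidef.mul_mul_conjTranspose_same ?_ U
    refine Matrix.PosSemidef.diagonal ?_
    intro i
    show (0:ℂ) ≤ ((f i : ℝ) : ℂ)
    exact_mod_cast hf i
  have conj_mul : ∀ f g : Fin d → ℂ,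
      (U * diagonal f * star U) * (U * diagonal g * star U)
        = U * diagonal (fun i => f i * g i) * star U := by
    intro f g
    calc (U * diagonal f * star U) * (U * diagonal g * star U)
        = U * diagonal f * (star U * U) * (diagonal g * star U) := by
          simp only [Matrix.mul_assoc]
      _ = U * (diagonal f * diagonal g) * star U := by
          rw [hsU]; simp only [Matrix.mul_one, Matrix.mul_assoc]
      _ = U * diagonal (fun i => f i * g i) * star U := by
          rw [Matrix.diagonal_mul_diagonal]
  have conj_trace : ∀ f : Fin d → ℂ, (U * diagonal f * star U).trace = ∑ i, f i := by
    intro f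
    rw [Matrix.trace_mul_cycle, hsU, Matrix.one_mul, Matrix.trace_diagonal]
  have habs : traceNorm H = ∑ i, |ev i| := by
    have hSpsd := conj_psd (fun i => |ev i|) (fun i => abs_nonneg _)
    have hsq : (U * diagonal (fun i => ((|ev i| : ℝ) : ℂ)) * star U) ^ 2 = Hᴴ * H := by
      rw [pow_two, conj_mul, hH.eq]
      conv_rhs => rw [hspec]
      rw [conj_mul]
      have hfun : (fun i : Fin d => ((|ev i| : ℝ) : ℂ) * ((|ev i| : ℝ) : ℂ))
          = fun i : Fin d => ((ev i : ℝ) : ℂ) * ((ev i : ℝ) : ℂ) := by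
        funext i
        rw [← Complex.ofReal_mul, ← Complex.ofReal_mul, abs_mul_abs_self]
      rw [hfun]
    have heq := hSpsd.eq_sqrt_of_sq_eq (Matrix.posSemidef_conjTranspose_mul_self H) hsq
    rw [traceNorm_eq_sqrt]
    rw [← heq, conj_trace]
    push_cast
    simp
  set χ : Fin d → ℝ := fun i => if ev i < 0 then 1 else 0 with hχ
  set Q : Matrix (Fin d) (Fin d) ℂ := U * diagonal (fun i => (χ i : ℂ)) * star U with hQdef
  have hQ : Q.PosSemidef := conj_psd χ (fun i => by
    by_cases h : ev i < 0 <;> simp [hχ, h])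
  have hQH : (Q * H).trace = ((∑ i, if ev i < 0 then ev i else 0 : ℝ) : ℂ) := by
    conv_lhs => rw [hspec]
    rw [hQdef, conj_mul, conj_trace]
    push_cast
    refine Finset.sum_congr rfl fun i _ => ?_
    by_cases h : ev i < 0 <;> simp [hχ, h]
  have h1Q : ((1 : Matrix (Fin d) (Fin d) ℂ) - Q).PosSemidef := by
    have hone : (1 : Matrix (Fin d) (Fin d) ℂ)
        = U * diagonal (fun _ => ((1:ℝ) : ℂ)) * star U := by
      have : diagonal (fun _ : Fin d => ((1:ℝ) : ℂ)) = 1 := by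
        simp [Matrix.diagonal_one]
      rw [this, Matrix.mul_one, hUs]
    have hsub : (1 : Matrix (Fin d) (Fin d) ℂ) - Q
        = U * diagonal (fun i => ((1 - χ i : ℝ) : ℂ)) * star U := by
      rw [hone, hQdef, ← Matrix.sub_mul, ← Matrix.mul_sub, Matrix.diagonal_sub]
      push_cast
      rfl
    rw [hsub]
    refine conj_psd _ fun i => ?_
    by_cases h : ev i < 0 <;> simp [hχ, h]
  -- trace inequalities
  have hQA : 0 ≤ (Q * A).trace := trace_mul_psd_nonneg hQ hA
  have hQB : 0 ≤ (B.trace - (Q * B).trace) := by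
    have := trace_mul_psd_nonneg h1Q hB
    rwa [Matrix.sub_mul, Matrix.one_mul, Matrix.trace_sub] at this
  have hQsplit : (Q * H).trace = (Q * A).trace - (Q * B).trace := by
    rw [hHdef, Matrix.mul_sub, Matrix.trace_sub]
  -- real parts
  have hQAre : 0 ≤ ((Q * A).trace).re := (Complex.le_def.mp hQA).1
  have hQBre : ((Q * B).trace).re ≤ (B.trace).re := by
    have := (Complex.le_def.mp hQB).1
    simp only [Complex.zero_re, Complex.sub_re] at this
    linarith
  set N : ℝ := ∑ i, (if ev i < 0 then -ev i else 0) with hN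
  have hNval : -N = ((Q * A).trace).re - ((Q * B).trace).re := by
    have h1 : ((Q * H).trace).re = ∑ i, (if ev i < 0 then ev i else 0) := by
      rw [hQH, Complex.ofReal_re]
    have h2 : (∑ i, (if ev i < 0 then ev i else 0 : ℝ)) = -N := by
      rw [hN, ← Finset.sum_neg_distrib]
      refine Finset.sum_congr rfl fun i _ => ?_
      by_cases h : ev i < 0 <;> simp [h]
    rw [hQsplit] at h1
    simp only [Complex.sub_re] at h1
    linarith [h1, h2.symm]
  have hNle : N ≤ (B.trace).re := by linarith
  have htrH : (∑ i, ev i) = (A.trace).re - (B.trace).re := by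
    have h1 : H.trace = ((∑ i, ev i : ℝ) : ℂ) := by
      conv_lhs => rw [hspec]
      rw [conj_trace]
      push_cast
      rfl
    have h2 : H.trace = A.trace - B.trace := by rw [hHdef, Matrix.trace_sub]
    have := h1.symm.trans h2
    have := congrArg Complex.re this
    simp only [Complex.ofReal_re, Complex.sub_re] at this
    linarith
  have hsum : (∑ i, |ev i|) = (∑ i, ev i) + 2 * N := by
    rw [hN, Finset.mul_sum, ← Finset.sum_add_distrib]
    refine Finset.sum_congr rfl fun i _ => ?_
    by_cases h : ev i < 0
    · simp only [h, if_pos]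
      rw [abs_of_neg h]; ring
    · simp only [h, if_neg, not_false_iff]
      rw [abs_of_nonneg (le_of_not_gt h)]; ring
  rw [habs, hsum]
  simp only [Complex.add_re]
  linarith

/-- Smoothed Thompson metric bound: for states `ω₀, ω₁` and `ε ∈ (0,1]`, there exist
density matrices `σ₀, σ₁` with `(1/2)‖ωᵢ − ω̃ᵢ‖₁ ≤ ε` and
`d_T(σ₀, σ₁) = max{D_max(σ₀‖σ₁), D_max(σ₁‖σ₀)} ≤ log₂(2/ε)`. -/
theorem smoothed_thompson_bound {d : ℕ} (ω₀ ω₁ : Matrix (Fin d) (Fin d) ℂ)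
    (h₀ : ω₀.PosSemidef) (h₀t : ω₀.trace = 1)
    (h₁ : ω₁.PosSemidef) (h₁t : ω₁.trace = 1)
    (ε : ℝ) (hε0 : 0 < ε) (hε1 : ε ≤ 1) :
    ∃ σ₀ σ₁ : Matrix (Fin d) (Fin d) ℂ,
      σ₀.PosSemidef ∧ σ₀.trace = 1 ∧ σ₁.PosSemidef ∧ σ₁.trace = 1 ∧
      (1 / 2) * traceNorm (ω₀ - σ₀) ≤ ε ∧ (1 / 2) * traceNorm (ω₁ - σ₁) ≤ ε ∧
      max (Dmax σ₀ σ₁) (Dmax σ₁ σ₀) ≤ ((Real.logb 2 (2 / ε) : ℝ) : EReal) := by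
  have ha : (0:ℝ) ≤ 1 - ε/2 := by linarith
  have hb : (0:ℝ) ≤ ε/2 := by linarith
  set σ₀ : Matrix (Fin d) (Fin d) ℂ := (1 - ε/2 : ℝ) • ω₀ + (ε/2 : ℝ) • ω₁ with hσ₀
  set σ₁ : Matrix (Fin d) (Fin d) ℂ := (ε/2 : ℝ) • ω₀ + (1 - ε/2 : ℝ) • ω₁ with hσ₁
  have hσ₀psd : σ₀.PosSemidef := (smul_psd h₀ ha).add (smul_psd h₁ hb)
  have hσ₁psd : σ₁.PosSemidef := (smul_psd h₀ hb).add (smul_psd h₁ ha)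
  have hσ₀t : σ₀.trace = 1 := by
    rw [hσ₀, Matrix.trace_add, Matrix.trace_smul, Matrix.trace_smul, h₀t, h₁t]
    show (1 - ε/2 : ℝ) • (1:ℂ) + (ε/2 : ℝ) • (1:ℂ) = 1
    rw [Complex.real_smul, Complex.real_smul]
    push_cast
    ring
  have hσ₁t : σ₁.trace = 1 := by
    rw [hσ₁, Matrix.trace_add, Matrix.trace_smul, Matrix.trace_smul, h₀t, h₁t]
    show (ε/2 : ℝ) • (1:ℂ) + (1 - ε/2 : ℝ) • (1:ℂ) = 1
    rw [Complex.real_smul, Complex.real_smul]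
    push_cast
    ring
  have hTbound : traceNorm (ω₀ - ω₁) ≤ 2 := by
    have := traceNorm_sub_le h₀ h₁
    rw [h₀t, h₁t] at this
    simp at this
    linarith
  have hTnn : 0 ≤ traceNorm (ω₁ - ω₀) ∧ 0 ≤ traceNorm (ω₀ - ω₁) :=
    ⟨traceNorm_nonneg _, traceNorm_nonneg _⟩
  have hT1bound : traceNorm (ω₁ - ω₀) ≤ 2 := by
    have := traceNorm_sub_le h₁ h₀
    rw [h₀t, h₁t] at this
    simp at this
    linarith
  have hclose₀ : (1 / 2) * traceNorm (ω₀ - σ₀) ≤ ε := by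
    have heq : ω₀ - σ₀ = (ε/2 : ℝ) • (ω₀ - ω₁) := by rw [hσ₀]; module
    rw [heq, traceNorm_smul _ hb]
    nlinarith [hTnn.2, hTbound]
  have hclose₁ : (1 / 2) * traceNorm (ω₁ - σ₁) ≤ ε := by
    have heq : ω₁ - σ₁ = (ε/2 : ℝ) • (ω₁ - ω₀) := by rw [hσ₁]; module
    rw [heq, traceNorm_smul _ hb]
    nlinarith [hTnn.1, hT1bound]
  -- Dmax bounds
  have hεc : (ε : ℂ) ≠ 0 := by exact_mod_cast hε0.ne'
  have hc2 : (0:ℝ) ≤ 2/ε - 1 - ε/2 := by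
    have h2e : 2 ≤ 2/ε := by
      rw [le_div_iff₀ hε0]; nlinarith
    linarith
  have hl : (2:ℝ) ^ (Real.logb 2 (2/ε)) = 2/ε :=
    Real.rpow_logb (by norm_num) (by norm_num) (by positivity)
  have hkey₀ : ((2/ε : ℝ) • σ₁ - σ₀).PosSemidef := by
    have heq : (2/ε : ℝ) • σ₁ - σ₀
        = (ε/2 : ℝ) • ω₀ + (2/ε - 1 - ε/2 : ℝ) • ω₁ := by
      rw [hσ₀, hσ₁]
      match_scalars <;> field_simp <;> ring
    rw [heq]
    exact (smul_psd h₀ hb).add (smul_psd h₁ hc2)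
  have hkey₁ : ((2/ε : ℝ) • σ₀ - σ₁).PosSemidef := by
    have heq : (2/ε : ℝ) • σ₀ - σ₁
        = (2/ε - 1 - ε/2 : ℝ) • ω₀ + (ε/2 : ℝ) • ω₁ := by
      rw [hσ₀, hσ₁]
      match_scalars <;> field_simp <;> ring
    rw [heq]
    exact (smul_psd h₀ hc2).add (smul_psd h₁ hb)
  have hD₀ : Dmax σ₀ σ₁ ≤ ((Real.logb 2 (2/ε) : ℝ) : EReal) := by
    apply sInf_le
    refine ⟨Real.logb 2 (2/ε), ?_, rfl⟩
    show ((2:ℝ) ^ (Real.logb 2 (2/ε)) • σ₁ - σ₀).PosSemidef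
    rw [hl]; exact hkey₀
  have hD₁ : Dmax σ₁ σ₀ ≤ ((Real.logb 2 (2/ε) : ℝ) : EReal) := by
    apply sInf_le
    refine ⟨Real.logb 2 (2/ε), ?_, rfl⟩
    show ((2:ℝ) ^ (Real.logb 2 (2/ε)) • σ₀ - σ₁).PosSemidef
    rw [hl]; exact hkey₁
  exact ⟨σ₀, σ₁, hσ₀psd, hσ₀t, hσ₁psd, hσ₁t, hclose₀, hclose₁, max_le hD₀ hD₁⟩
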